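/- Every regular P-space is zero-dimensional, hence completely regular and strongly zero-dimensional: if X is a regular topological space in which every countable intersection of open sets is open, then the clopen sets of X form a base of X, and for every pair Z₁, Z₂ of disjoint zero-sets of X there exists a clopen set U with Z₁ ⊆ U ⊆ X \ Z₂. -/
import Mathlib


open Set TopologicalSpace

/-- `X` is a P-space: every countable intersection of open sets is open. -/
def IsPSpace (X : Type*) [TopologicalSpace X] : Prop :=
  ∀ F : Set (Set X), F.Countable → (∀ U ∈ F, IsOpen U) → IsOpen (⋂₀ F)

theorem stmt15 {X : Type*} [TopologicalSpace X]
    -- `X` is regular (no T₁ assumed)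
    (hreg : ∀ (x : X) (V : Set X), IsOpen V → x ∈ V →
      ∃ U : Set X, IsOpen U ∧ x ∈ U ∧ closure U ⊆ V)
    (hP : IsPSpace X) :
    -- `X` is zero-dimensional: the clopen sets form a base
    IsTopologicalBasis {U : Set X | IsClopen U} ∧
    -- hence completely regular: the co-zero sets form a base
    IsTopologicalBasis {U : Set X | ∃ f : X → ℝ, Continuous f ∧ U = (f ⁻¹' {0})ᶜ} ∧
    -- and strongly zero-dimensional: disjoint zero-sets are separated by clopen sets
    ∀ f g : X → ℝ, Continuous f → Continuous g → Disjoint (f ⁻¹' {0}) (g ⁻¹' {0}) →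
      ∃ U : Set X, IsClopen U ∧ f ⁻¹' {0} ⊆ U ∧ U ⊆ (g ⁻¹' {0})ᶜ := by
  -- countable intersections of opens (indexed by ℕ) are open
  have hPi : ∀ (U : ℕ → Set X), (∀ n, IsOpen (U n)) → IsOpen (⋂ n, U n) := by
    intro U hU
    have := hP (Set.range U) (Set.countable_range U) (by rintro _ ⟨n, rfl⟩; exact hU n)
    rwa [Set.sInter_range] at this
  -- key: clopen neighborhoods exist inside any open neighborhood
  have key : ∀ (x : X) (u : Set X), IsOpen u → x ∈ u →
      ∃ W : Set X, IsClopen W ∧ x ∈ W ∧ W ⊆ u := by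
    intro x u hu hx
    choose sh hsh1 hsh2 hsh3 using fun (V : Set X) (h : IsOpen V ∧ x ∈ V) => hreg x V h.1 h.2
    let T : ℕ → {V : Set X // IsOpen V ∧ x ∈ V} := fun n =>
      Nat.rec ⟨u, hu, hx⟩ (fun _ p => ⟨sh p.1 p.2, hsh1 p.1 p.2, hsh2 p.1 p.2⟩) n
    have hTsucc : ∀ n, closure (T (n + 1)).1 ⊆ (T n).1 := fun n => hsh3 (T n).1 (T n).2
    refine ⟨⋂ n, (T n).1, ⟨?_, hPi _ fun n => (T n).2.1⟩, Set.mem_iInter.2 fun n => (T n).2.2,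
      Set.iInter_subset _ 0⟩
    -- closedness: the intersection equals the intersection of the closures
    have heq : (⋂ n, (T n).1) = ⋂ n, closure (T n).1 := by
      apply Set.Subset.antisymm
      · exact Set.iInter_mono fun n => subset_closure
      · intro y hy
        refine Set.mem_iInter.2 fun n => hTsucc n ?_
        exact Set.mem_iInter.1 hy (n + 1)
    rw [heq]
    exact isClosed_iInter fun n => isClosed_closure
  have hbasis : IsTopologicalBasis {U : Set X | IsClopen U} :=
    isTopologicalBasis_of_isOpen_of_nhds (fun u hu => hu.2)
      (fun x u hx hu => by
        obtain ⟨W, hW, hxW, hWu⟩ := key x u hu hx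
        exact ⟨W, hW, hxW, hWu⟩)
  refine ⟨hbasis, ?_, ?_⟩
  · refine isTopologicalBasis_of_isOpen_of_nhds ?_ ?_
    · rintro u ⟨f, hf, rfl⟩
      exact (IsClosed.preimage hf isClosed_singleton).isOpen_compl
    · intro x u hx hu
      obtain ⟨W, hW, hxW, hWu⟩ := key x u hu hx
      classical
      refine ⟨W, ⟨fun y => if y ∈ W then 1 else 0, ?_, ?_⟩, hxW, hWu⟩
      · exact Continuous.if (fun a ha => by simp [hW.frontier_eq] at ha)
          continuous_const continuous_const
      · ext y
        by_cases h : y ∈ W <;> simp [h]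
  · intro f g hf hg hdisj
    -- zero-sets are clopen in a P-space
    have hzero : ∀ (h : X → ℝ), Continuous h → IsClopen (h ⁻¹' {0}) := by
      intro h hh
      refine ⟨IsClosed.preimage hh isClosed_singleton, ?_⟩
      have heq : h ⁻¹' {0} = ⋂ n : ℕ, h ⁻¹' Metric.ball 0 (1 / (n + 1)) := by
        ext y
        simp only [Set.mem_preimage, Set.mem_singleton_iff, Set.mem_iInter, Metric.mem_ball,
          Real.dist_eq]
        constructor
        · intro hy0 n; simp [hy0]; positivity
        · intro hy
          by_contra hne
          obtain ⟨n, hn⟩ := exists_nat_one_div_lt (abs_pos.2 (sub_ne_zero.2 hne))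
          exact absurd (hy n) (not_lt.2 (by simpa using hn.le))
      rw [heq]
      exact hPi _ fun n => (Metric.isOpen_ball).preimage hh
    exact ⟨f ⁻¹' {0}, hzero f hf, subset_rfl, Set.subset_compl_iff_disjoint_right.2 hdisj⟩
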